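/- Let V be a p-adic Banach space, let Y: V → 𝓕(V) be a continuous linear state-field map, and let u, v, w ∈ V. Then for all r, s, t ∈ ℤ each of the three series ∑_{i≥0} C(r,i)(u(t+i)v)(r+s-i)w, ∑_{i≥0} (-1)^i C(t,i) u(r+t-i)(v(s+i)w), and ∑_{i≥0} (-1)^{t+i} C(t,i) v(s+t-i)(u(r+i)w) converges in V. -/
import Mathlib

open Filter

variable {p : ℕ} [Fact p.Prime] {V : Type*} [NormedAddCommGroup V] [NormedSpace ℚ_[p] V]

/-- A `p`-adic field on a `p`-adic Banach space `V`, given by its modes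
`A n : V →L[ℚ_[p]] V`: the modes are uniformly bounded, and `A n b → 0` as `n → ∞`
for every `b ∈ V`. -/
def IsPadicField (A : ℤ → V →L[ℚ_[p]] V) : Prop :=
  (∃ M : ℝ, 0 ≤ M ∧ ∀ (n : ℤ) (b : V), ‖A n b‖ ≤ M * ‖b‖) ∧
    ∀ b : V, Tendsto (fun n : ℤ => A n b) atTop (nhds 0)

lemma aux_norm_zsmul_le (p : ℕ) [Fact p.Prime] {V : Type*} [NormedAddCommGroup V]
    [NormedSpace ℚ_[p] V] (z : ℤ) (x : V) : ‖z • x‖ ≤ ‖x‖ := by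
  rw [← Int.cast_smul_eq_zsmul ℚ_[p] z x, norm_smul]
  calc ‖(z : ℚ_[p])‖ * ‖x‖ ≤ 1 * ‖x‖ :=
        mul_le_mul_of_nonneg_right (Padic.norm_int_le_one z) (norm_nonneg x)
    _ = ‖x‖ := one_mul ‖x‖

lemma aux_summable {V : Type*} [NormedAddCommGroup V] [CompleteSpace V] [IsUltrametricDist V]
    (f : ℕ → V) (g : ℕ → ℝ)
    (hg : Tendsto g atTop (nhds 0)) (hfg : ∀ i, ‖f i‖ ≤ g i) : Summable f := by
  apply NonarchimedeanAddGroup.summable_of_tendsto_cofinite_zero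
  rw [Nat.cofinite_eq_atTop, tendsto_zero_iff_norm_tendsto_zero]
  exact squeeze_zero (fun i => norm_nonneg _) hfg hg

lemma aux_comp (c : ℤ) : Tendsto (fun i : ℕ => c + (i : ℤ)) atTop atTop :=
  tendsto_atTop_add_const_left atTop c tendsto_natCast_atTop_atTop

/-- For a continuous linear state–field map `Y : V → 𝓕(V)` on a `p`-adic Banach
space, each of the three series appearing in the `p`-adic Jacobi identity
converges in `V`. -/
theorem padic_jacobi_series_converge
    [CompleteSpace V] [IsUltrametricDist V]
    (Y : V →ₗ[ℚ_[p]] (ℤ → V →L[ℚ_[p]] V))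
    (hfield : ∀ a : V, IsPadicField (Y a))
    (hYbound : ∃ C : ℝ, 0 ≤ C ∧ ∀ (a : V) (n : ℤ), ‖Y a n‖ ≤ C * ‖a‖)
    (u v w : V) (r s t : ℤ) :
    Summable (fun i : ℕ => Ring.choose r i • Y (Y u (t + i) v) (r + s - i) w) ∧
    Summable (fun i : ℕ =>
      ((-1) ^ i * Ring.choose t i : ℤ) • Y u (r + t - i) (Y v (s + i) w)) ∧
    Summable (fun i : ℕ =>
      ((((-1 : ℤˣ) ^ (t + i) : ℤˣ) : ℤ) * Ring.choose t i) •
        Y v (s + t - i) (Y u (r + i) w)) := by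
  obtain ⟨C, hC0, hC⟩ := hYbound
  obtain ⟨⟨Mu, hMu0, hMu⟩, hu⟩ := hfield u
  obtain ⟨⟨Mv, hMv0, hMv⟩, hv⟩ := hfield v
  refine ⟨?_, ?_, ?_⟩
  · refine aux_summable _ (fun i : ℕ => C * ‖w‖ * ‖Y u (t + i) v‖) ?_ ?_
    · have h1 : Tendsto (fun i : ℕ => Y u (t + i) v) atTop (nhds 0) :=
        (hu v).comp (aux_comp t)
      have h2 := (tendsto_zero_iff_norm_tendsto_zero.mp h1).const_mul (C * ‖w‖)
      simpa using h2
    · intro i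
      calc ‖Ring.choose r i • Y (Y u (t + i) v) (r + s - i) w‖
          ≤ ‖Y (Y u (t + i) v) (r + s - i) w‖ := aux_norm_zsmul_le p _ _
        _ ≤ ‖Y (Y u (t + i) v) (r + s - i)‖ * ‖w‖ := ContinuousLinearMap.le_opNorm _ _
        _ ≤ C * ‖Y u (t + i) v‖ * ‖w‖ :=
            mul_le_mul_of_nonneg_right (hC _ _) (norm_nonneg w)
        _ = C * ‖w‖ * ‖Y u (t + i) v‖ := by ring
  · refine aux_summable _ (fun i : ℕ => Mu * ‖Y v (s + i) w‖) ?_ ?_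
    · have h1 : Tendsto (fun i : ℕ => Y v (s + i) w) atTop (nhds 0) :=
        (hv w).comp (aux_comp s)
      have h2 := (tendsto_zero_iff_norm_tendsto_zero.mp h1).const_mul Mu
      simpa using h2
    · intro i
      calc ‖((-1) ^ i * Ring.choose t i : ℤ) • Y u (r + t - i) (Y v (s + i) w)‖
          ≤ ‖Y u (r + t - i) (Y v (s + i) w)‖ := aux_norm_zsmul_le p _ _
        _ ≤ Mu * ‖Y v (s + i) w‖ := hMu _ _
  · refine aux_summable _ (fun i : ℕ => Mv * ‖Y u (r + i) w‖) ?_ ?_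
    · have h1 : Tendsto (fun i : ℕ => Y u (r + i) w) atTop (nhds 0) :=
        (hu w).comp (aux_comp r)
      have h2 := (tendsto_zero_iff_norm_tendsto_zero.mp h1).const_mul Mv
      simpa using h2
    · intro i
      calc ‖((((-1 : ℤˣ) ^ (t + i) : ℤˣ) : ℤ) * Ring.choose t i) •
              Y v (s + t - i) (Y u (r + i) w)‖
          ≤ ‖Y v (s + t - i) (Y u (r + i) w)‖ := aux_norm_zsmul_le p _ _
        _ ≤ Mv * ‖Y u (r + i) w‖ := hMv _ _
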